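/- Completeness of qudit tetrahedral bases: for any real phases α_{z,x} (indexed by (z,x) ∈ ℤ_d^{n−1} × ℤ_d), the equal-weight superposition ψ = d^{−n/2} Σ_{z,x} e^{iα_{z,x}} Φ^{(d)}_{z,x} is a unit vector, and the orbit {U_g ψ : g ∈ ℤ_dⁿ} is an orthonormal family of dⁿ vectors, i.e. ⟨U_g ψ, U_h ψ⟩ = 1 if g = h and 0 if g ≠ h; hence it is an orthonormal basis of (ℂ^d)^{⊗n}. -/

import Mathlib

open Matrix Complex Finset

/-- ω = exp(2πi/d). -/
noncomputable def omg (d : ℕ) : ℂ := Complex.exp (2 * Real.pi * Complex.I / d)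

/-- Generalized Pauli Z on ℂ^d: Z|j⟩ = ω^j |j⟩. -/
noncomputable def Zd (d : ℕ) : Matrix (ZMod d) (ZMod d) ℂ :=
  Matrix.diagonal fun j => omg d ^ j.val

/-- Generalized Pauli X on ℂ^d: X|j⟩ = |j+1 mod d⟩. -/
noncomputable def Xd (d : ℕ) : Matrix (ZMod d) (ZMod d) ℂ :=
  Matrix.of fun j k => if j = k + 1 then 1 else 0

/-- Discrete Fourier transform H = d^{-1/2} Σ ω^{jk} |j⟩⟨k|. -/
noncomputable def Hd (d : ℕ) : Matrix (ZMod d) (ZMod d) ℂ :=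
  Matrix.of fun j k => (Real.sqrt d : ℂ)⁻¹ * omg d ^ (j.val * k.val)

/-- Tensor product of single-qudit operators, as a matrix on (ℂ^d)^{⊗n}. -/
noncomputable def tensorOp {d n : ℕ} (A : Fin n → Matrix (ZMod d) (ZMod d) ℂ) :
    Matrix (Fin n → ZMod d) (Fin n → ZMod d) ℂ :=
  Matrix.of fun v w => ∏ i, A i (v i) (w i)

/-- Single-site operator A acting on qudit i (identity elsewhere). -/
noncomputable def single {d n : ℕ} (i : Fin n) (A : Matrix (ZMod d) (ZMod d) ℂ) :
    Matrix (Fin n → ZMod d) (Fin n → ZMod d) ℂ :=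
  tensorOp fun j => if j = i then A else 1

/-- The inner product ⟨f, g⟩ = Σ conj(f v) g v (antilinear in the first argument). -/
noncomputable def dotc {ι : Type*} [Fintype ι] (f g : ι → ℂ) : ℂ :=
  ∑ v, (starRingEnd ℂ) (f v) * g v

/-- Computational basis vector |a⟩. -/
noncomputable def ket {ι : Type*} [DecidableEq ι] (a : ι) : ι → ℂ :=
  fun v => if v = a then 1 else 0

/-- The unitaries U_g, g = (z₁,…,z_{n−1},x) ∈ ℤ_dⁿ:
U_g = ∏_{i=1}^{n−1} (Z^{(i)}(Z^{(i+1)})⁻¹)^{zᵢ} · (X⊗⋯⊗X)^x.  -/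
noncomputable def Ug (d n : ℕ) [NeZero d] [NeZero n] (g : Fin n → ZMod d) :
    Matrix (Fin n → ZMod d) (Fin n → ZMod d) ℂ :=
  (((List.finRange (n - 1)).map fun i =>
      (_root_.single (⟨i.val, by have := i.isLt; omega⟩ : Fin n) (Zd d) *
          (_root_.single (⟨i.val + 1, by have := i.isLt; omega⟩ : Fin n) (Zd d))⁻¹)
        ^ (g ⟨i.val, by have := i.isLt; omega⟩).val).prod) *
    (tensorOp fun _ : Fin n => Xd d)
      ^ (g ⟨n - 1, by have := Nat.pos_of_ne_zero (NeZero.ne n); omega⟩).val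

/-- The joint eigenstates Φ^{(d)}_{z,x} = d^{-1/2} Σ_k ω^{−kx} |s₁+k,…,s_{n−1}+k,k⟩,
with sᵢ = zᵢ + ⋯ + z_{n−1}. -/
noncomputable def Phi (d n : ℕ) [NeZero d] (z : Fin (n - 1) → ZMod d) (x : ZMod d) :
    (Fin n → ZMod d) → ℂ :=
  fun v => (Real.sqrt d : ℂ)⁻¹ * ∑ k : ZMod d,
    (omg d ^ (k.val * x.val))⁻¹ *
      (if ∀ i : Fin n, v i =
          (if h : i.val < n - 1
            then ∑ j ∈ Finset.univ.filter (fun j : Fin (n - 1) => (⟨i.val, h⟩ : Fin (n - 1)) ≤ j), z j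
            else 0) + k
        then 1 else 0)


/-!
STATEMENT 2: Completeness of qudit tetrahedral bases: the equal-weight superposition
ψ = d^{−n/2} Σ_{z,x} e^{iα_{z,x}} Φ^{(d)}_{z,x} is a unit vector and its orbit
{U_g ψ : g ∈ ℤ_dⁿ} is an orthonormal basis of (ℂ^d)^{⊗n}.
-/
set_option linter.unusedSectionVars false

section chi
variable (d : ℕ) [NeZero d]

lemma omg_ne_zero : omg d ≠ 0 := Complex.exp_ne_zero _

lemma omg_prim : IsPrimitiveRoot (omg d) d := by
  exact Complex.isPrimitiveRoot_exp d (NeZero.ne d)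

lemma omg_pow_d : omg d ^ d = 1 := (omg_prim d).pow_eq_one

lemma omg_pow_mod (m : ℕ) : omg d ^ (m % d) = omg d ^ m := by
  conv_rhs => rw [← Nat.mod_add_div m d, pow_add, pow_mul, omg_pow_d, one_pow, mul_one]

noncomputable def chi (t : ZMod d) : ℂ := omg d ^ t.val

lemma chi_zero : chi d 0 = 1 := by simp [chi, ZMod.val_zero]

lemma chi_add (a b : ZMod d) : chi d (a + b) = chi d a * chi d b := by
  rw [chi, chi, chi, ZMod.val_add, omg_pow_mod, pow_add]

lemma chi_ne_zero (t : ZMod d) : chi d t ≠ 0 := pow_ne_zero _ (omg_ne_zero d)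

lemma chi_neg (a : ZMod d) : chi d (-a) = (chi d a)⁻¹ := by
  have h : chi d (-a) * chi d a = 1 := by rw [← chi_add, neg_add_cancel, chi_zero]
  exact eq_inv_of_mul_eq_one_left h

lemma conj_omg_pow (m : ℕ) : (starRingEnd ℂ) (omg d ^ m) = (omg d ^ m)⁻¹ := by
  rw [map_pow, ← inv_pow]
  congr 1
  rw [omg, ← Complex.exp_conj, ← Complex.exp_neg]
  congr 1
  simp [map_div₀, Complex.conj_I, map_ofNat]
  ring

lemma conj_chi (t : ZMod d) : (starRingEnd ℂ) (chi d t) = chi d (-t) := by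
  rw [chi, conj_omg_pow, chi_neg, chi]

lemma chi_mul_val (a b : ZMod d) : chi d (a * b) = omg d ^ (a.val * b.val) := by
  rw [chi, ZMod.val_mul, omg_pow_mod]

lemma chi_pow (a : ZMod d) (m : ℕ) : chi d a ^ m = chi d ((m : ZMod d) * a) := by
  induction m with
  | zero => simp [chi_zero]
  | succ k ih =>
      rw [pow_succ, ih]
      push_cast
      rw [add_mul, one_mul, chi_add]

lemma chi_sum {ι : Type*} (s : Finset ι) (f : ι → ZMod d) :
    chi d (∑ i ∈ s, f i) = ∏ i ∈ s, chi d (f i) := by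
  induction s using Finset.cons_induction with
  | empty => simp [chi_zero]
  | cons a s ha ih => rw [Finset.sum_cons, Finset.prod_cons, chi_add, ih]

lemma sum_chi (a : ZMod d) :
    ∑ t : ZMod d, chi d (a * t) = if a = 0 then (d : ℂ) else 0 := by
  split_ifs with h
  · subst h; simp [chi_zero, ZMod.card]
  · have hz : ∑ t : ZMod d, chi d (a * t) = ∑ i ∈ Finset.range d, (omg d ^ a.val) ^ i := by
      rw [Finset.sum_bij' (fun (t : ZMod d) _ => t.val) (fun (i : ℕ) _ => (i : ZMod d))]
      · intro t _; exact Finset.mem_range.mpr (ZMod.val_lt t)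
      · intro i hi; exact Finset.mem_univ _
      · intro t _; simp [ZMod.natCast_val, ZMod.cast_id]
      · intro i hi; exact ZMod.val_cast_of_lt (Finset.mem_range.mp hi)
      · intro t _; rw [chi_mul_val, ← pow_mul, mul_comm]
    rw [hz]
    have hne : omg d ^ a.val ≠ 1 := by
      intro hh
      have := (omg_prim d).pow_eq_one_iff_dvd a.val |>.mp hh
      have hv : a.val ≠ 0 := fun h0 => h ((ZMod.val_eq_zero a).mp h0)
      have := Nat.le_of_dvd (Nat.pos_of_ne_zero hv) this
      have := ZMod.val_lt a
      omega
    rw [geom_sum_eq hne, ← pow_mul, mul_comm a.val d, pow_mul, omg_pow_d, one_pow, sub_self, zero_div]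

end chi


section phi
variable (d n : ℕ) [NeZero d] [NeZero n]

/-- The partial-sum vector. -/
noncomputable def Svec (z : Fin (n - 1) → ZMod d) : Fin n → ZMod d :=
  fun i => if h : i.val < n - 1
    then ∑ j ∈ Finset.univ.filter (fun j : Fin (n - 1) => (⟨i.val, h⟩ : Fin (n - 1)) ≤ j), z j
    else 0

/-- last index -/
def lastI : Fin n := ⟨n - 1, by have := Nat.pos_of_ne_zero (NeZero.ne n); omega⟩

lemma Svec_last (z : Fin (n - 1) → ZMod d) : Svec d n z (lastI n) = 0 := by
  rw [Svec, dif_neg]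
  simp [lastI]

lemma Phi_apply (z : Fin (n - 1) → ZMod d) (x : ZMod d) (v : Fin n → ZMod d) :
    Phi d n z x v = (Real.sqrt d : ℂ)⁻¹ * ((chi d (v (lastI n) * x))⁻¹ *
      (if ∀ i : Fin n, v i = Svec d n z i + v (lastI n) then 1 else 0)) := by
  have hPhi : Phi d n z x v = (Real.sqrt d : ℂ)⁻¹ * ∑ k : ZMod d,
      (omg d ^ (k.val * x.val))⁻¹ *
        (if ∀ i : Fin n, v i = Svec d n z i + k then 1 else 0) := rfl
  rw [hPhi]
  congr 1
  rw [Finset.sum_eq_single (v (lastI n))]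
  · rw [chi_mul_val]
  · intro k _ hk
    rw [if_neg, mul_zero]
    intro hP
    have h1 := hP (lastI n)
    rw [Svec_last, zero_add] at h1
    exact hk h1.symm
  · intro h; exact absurd (Finset.mem_univ _) h

lemma Svec_step (z : Fin (n - 1) → ZMod d) (i : Fin (n - 1)) :
    Svec d n z ⟨i.val, by omega⟩ =
      z i + Svec d n z ⟨i.val + 1, by omega⟩ := by
  have hi := i.isLt
  rw [Svec, Svec, dif_pos hi]
  by_cases h2 : i.val + 1 < n - 1
  · rw [dif_pos h2]
    have : Finset.univ.filter (fun j : Fin (n - 1) => (⟨i.val, hi⟩ : Fin (n - 1)) ≤ j) =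
        insert i (Finset.univ.filter (fun j : Fin (n - 1) => (⟨i.val + 1, h2⟩ : Fin (n - 1)) ≤ j)) := by
      ext j
      simp only [Finset.mem_filter, Finset.mem_univ, true_and, Finset.mem_insert,
        Fin.le_def, Fin.ext_iff]
      omega
    rw [this, Finset.sum_insert]
    simp only [Finset.mem_filter, Finset.mem_univ, true_and, Fin.le_def]
    omega
  · rw [dif_neg h2, add_zero]
    have : Finset.univ.filter (fun j : Fin (n - 1) => (⟨i.val, hi⟩ : Fin (n - 1)) ≤ j) = {i} := by
      ext j
      have hj := j.isLt
      simp only [Finset.mem_filter, Finset.mem_univ, true_and, Finset.mem_singleton,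
        Fin.le_def, Fin.ext_iff]
      omega
    rw [this, Finset.sum_singleton]

lemma Svec_inj (z z' : Fin (n - 1) → ZMod d) (h : Svec d n z = Svec d n z') : z = z' := by
  funext i
  have h1 := congrFun h (⟨i.val, by omega⟩ : Fin n)
  have h2 := congrFun h (⟨i.val + 1, by omega⟩ : Fin n)
  have e1 := Svec_step d n z i
  have e2 := Svec_step d n z' i
  rw [e1, e2, h2] at h1
  exact add_right_cancel h1

lemma sum_fiber (z : Fin (n - 1) → ZMod d) (f : (Fin n → ZMod d) → ℂ) :
    ∑ v : Fin n → ZMod d,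
      f v * (if ∀ i : Fin n, v i = Svec d n z i + v (lastI n) then 1 else 0)
      = ∑ k : ZMod d, f (fun i => Svec d n z i + k) := by
  have key : ∀ v : Fin n → ZMod d,
      (if ∀ i : Fin n, v i = Svec d n z i + v (lastI n) then (1:ℂ) else 0)
        = ∑ k : ZMod d, if v = (fun i => Svec d n z i + k) then 1 else 0 := by
    intro v
    by_cases h : ∀ i : Fin n, v i = Svec d n z i + v (lastI n)
    · rw [if_pos h]
      rw [Finset.sum_eq_single (v (lastI n))]
      · rw [if_pos (funext h)]
      · intro k _ hk
        rw [if_neg]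
        intro hv
        apply hk
        have := congrFun hv (lastI n)
        rw [Svec_last, zero_add] at this
        exact this.symm
      · intro hh; exact absurd (Finset.mem_univ _) hh
    · rw [if_neg h]
      symm
      apply Finset.sum_eq_zero
      intro k _
      rw [if_neg]
      intro hv
      apply h
      intro i
      have hlast := congrFun hv (lastI n)
      rw [Svec_last, zero_add] at hlast
      rw [congrFun hv i, hlast]
  calc ∑ v : Fin n → ZMod d, f v * (if ∀ i : Fin n, v i = Svec d n z i + v (lastI n) then (1:ℂ) else 0)
      = ∑ v : Fin n → ZMod d, ∑ k : ZMod d, f v * (if v = (fun i => Svec d n z i + k) then 1 else 0) := by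
        refine Finset.sum_congr rfl fun v _ => ?_
        rw [key v, Finset.mul_sum]
    _ = ∑ k : ZMod d, ∑ v : Fin n → ZMod d, f v * (if v = (fun i => Svec d n z i + k) then 1 else 0) :=
        Finset.sum_comm
    _ = ∑ k : ZMod d, f (fun i => Svec d n z i + k) := by
        refine Finset.sum_congr rfl fun k _ => ?_
        rw [Finset.sum_eq_single (fun i => Svec d n z i + k)]
        · rw [if_pos rfl, mul_one]
        · intro v _ hv; rw [if_neg hv, mul_zero]
        · intro hh; exact absurd (Finset.mem_univ _) hh

end phi


section ortho
variable (d n : ℕ) [NeZero d] [NeZero n]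

lemma sqrtd_mul_self : (Real.sqrt d : ℂ) * (Real.sqrt d : ℂ) = (d : ℂ) := by
  rw [← Complex.ofReal_mul, Real.mul_self_sqrt (Nat.cast_nonneg d)]
  push_cast
  rfl

lemma Phi_eq_zero (z : Fin (n - 1) → ZMod d) (x : ZMod d) (v : Fin n → ZMod d)
    (h : ¬ ∀ i : Fin n, v i = Svec d n z i + v (lastI n)) : Phi d n z x v = 0 := by
  rw [Phi_apply, if_neg h, mul_zero, mul_zero]

lemma conj_Phi (z : Fin (n - 1) → ZMod d) (x : ZMod d) (v : Fin n → ZMod d) :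
    (starRingEnd ℂ) (Phi d n z x v) = (Real.sqrt d : ℂ)⁻¹ *
      (chi d (v (lastI n) * x) *
        (if ∀ i : Fin n, v i = Svec d n z i + v (lastI n) then 1 else 0)) := by
  rw [Phi_apply]
  rw [_root_.map_mul, _root_.map_mul, map_inv₀, map_inv₀, Complex.conj_ofReal, conj_chi, chi_neg, inv_inv]
  congr 1
  congr 1
  simp [apply_ite (starRingEnd ℂ)]

lemma dotc_Phi (z z' : Fin (n - 1) → ZMod d) (x x' : ZMod d) :
    dotc (Phi d n z x) (Phi d n z' x') = if z = z' ∧ x = x' then 1 else 0 := by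
  by_cases hz : z = z'
  · subst hz
    rw [dotc]
    have hterm : ∀ v : Fin n → ZMod d,
        (starRingEnd ℂ) (Phi d n z x v) * Phi d n z x' v =
        ((Real.sqrt d : ℂ)⁻¹ * (Real.sqrt d : ℂ)⁻¹ * (chi d (v (lastI n) * x) *
          (chi d (v (lastI n) * x'))⁻¹)) *
          (if ∀ i : Fin n, v i = Svec d n z i + v (lastI n) then 1 else 0) := by
      intro v
      rw [conj_Phi, Phi_apply]
      by_cases h : ∀ i : Fin n, v i = Svec d n z i + v (lastI n)
      · rw [if_pos h]; ring
      · rw [if_neg h]; ring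
    rw [Finset.sum_congr rfl fun v _ => hterm v, sum_fiber]
    have hlast : ∀ k : ZMod d, (fun i => Svec d n z i + k) (lastI n) = k := by
      intro k; simp only [Svec_last, zero_add]
    have : ∀ k : ZMod d,
        (Real.sqrt d : ℂ)⁻¹ * (Real.sqrt d : ℂ)⁻¹ *
          (chi d ((fun i => Svec d n z i + k) (lastI n) * x) *
            (chi d ((fun i => Svec d n z i + k) (lastI n) * x'))⁻¹)
        = ((d : ℂ))⁻¹ * chi d ((x - x') * k) := by
      intro k
      rw [hlast k]
      rw [← mul_inv, sqrtd_mul_self]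
      congr 1
      rw [← chi_neg, ← chi_add]
      congr 1
      ring
    rw [Finset.sum_congr rfl fun k _ => this k, ← Finset.mul_sum, sum_chi]
    have hd0 : (d : ℂ) ≠ 0 := Nat.cast_ne_zero.mpr (NeZero.ne d)
    by_cases hx : x = x'
    · subst hx
      rw [if_pos (sub_self x ▸ rfl), if_pos ⟨rfl, rfl⟩, inv_mul_cancel₀ hd0]
    · rw [if_neg (fun h => hx (sub_eq_zero.mp h)), if_neg (fun h => hx h.2), mul_zero]
  · rw [if_neg (fun h => hz h.1), dotc]
    apply Finset.sum_eq_zero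
    intro v _
    by_cases h1 : ∀ i : Fin n, v i = Svec d n z i + v (lastI n)
    · by_cases h2 : ∀ i : Fin n, v i = Svec d n z' i + v (lastI n)
      · exfalso
        apply hz
        apply Svec_inj d n
        funext i
        have := (h1 i).symm.trans (h2 i)
        exact add_right_cancel this
      · rw [Phi_eq_zero d n z' x' v h2, mul_zero]
    · rw [Phi_eq_zero d n z x v h1, map_zero, zero_mul]

end ortho





section eigen
variable (d n : ℕ) [NeZero d] [NeZero n]

lemma single_Zd (j : Fin n) :
    single j (Zd d) = Matrix.diagonal (fun v : Fin n → ZMod d => omg d ^ ((v j).val)) := by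
  ext v w
  rw [_root_.single, tensorOp, Matrix.of_apply]
  by_cases hvw : v = w
  · subst hvw
    rw [Matrix.diagonal_apply_eq]
    have h1 : ∀ t : Fin n, (if t = j then Zd d else 1) (v t) (v t)
        = if t = j then omg d ^ ((v t).val) else 1 := by
      intro t
      split_ifs
      · rw [Zd, Matrix.diagonal_apply_eq]
      · rw [Matrix.one_apply_eq]
    rw [Finset.prod_congr rfl fun t _ => h1 t, Finset.prod_ite_eq',
      if_pos (Finset.mem_univ j)]
  · rw [Matrix.diagonal_apply_ne _ hvw]
    obtain ⟨t, ht⟩ := Function.ne_iff.mp hvw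
    refine Finset.prod_eq_zero (Finset.mem_univ t) ?_
    split_ifs
    · rw [Zd, Matrix.diagonal_apply_ne _ ht]
    · rw [Matrix.one_apply_ne ht]

lemma single_Zd_inv (j : Fin n) :
    (single j (Zd d))⁻¹ =
      Matrix.diagonal (fun v : Fin n → ZMod d => (omg d ^ ((v j).val))⁻¹) := by
  apply Matrix.inv_eq_right_inv
  rw [single_Zd, Matrix.diagonal_mul_diagonal]
  have he : (fun i : Fin n → ZMod d => omg d ^ ((i j).val) * (omg d ^ ((i j).val))⁻¹)
      = fun _ => (1 : ℂ) := funext fun v => mul_inv_cancel₀ (pow_ne_zero _ (omg_ne_zero d))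
  rw [he, Matrix.diagonal_one]

lemma factor_eigen (z : Fin (n - 1) → ZMod d) (x : ZMod d) (i : Fin (n - 1)) (p : ℕ)
    (h1 : (i.val : ℕ) < n) (h2 : i.val + 1 < n) :
    ((single (⟨i.val, h1⟩ : Fin n) (Zd d) *
        (single (⟨i.val + 1, h2⟩ : Fin n) (Zd d))⁻¹) ^ p) *ᵥ Phi d n z x
      = chi d ((p : ZMod d) * z i) • Phi d n z x := by
  rw [single_Zd, single_Zd_inv, Matrix.diagonal_mul_diagonal, Matrix.diagonal_pow]
  funext w
  rw [Matrix.mulVec_diagonal]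
  simp only [Pi.smul_apply, smul_eq_mul, Pi.pow_apply, Pi.mul_apply]
  by_cases h : ∀ t : Fin n, w t = Svec d n z t + w (lastI n)
  · have hw : w ⟨i.val, h1⟩ - w ⟨i.val + 1, h2⟩ = z i := by
      rw [h ⟨i.val, h1⟩, h ⟨i.val + 1, h2⟩, Svec_step d n z i]
      ring
    have hc : omg d ^ ((w ⟨i.val, h1⟩).val) * (omg d ^ ((w ⟨i.val + 1, h2⟩).val))⁻¹
        = chi d (z i) := by
      rw [← hw, show chi d (w ⟨i.val, h1⟩ - w ⟨i.val + 1, h2⟩)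
        = chi d (w ⟨i.val, h1⟩) * chi d (-(w ⟨i.val + 1, h2⟩)) by
          rw [← chi_add]; ring_nf, chi_neg]
      rfl
    rw [hc, chi_pow]
  · rw [Phi_eq_zero d n z x w h, mul_zero, mul_zero]

lemma X_mulVec (f : (Fin n → ZMod d) → ℂ) :
    (tensorOp fun _ : Fin n => Xd d) *ᵥ f = fun v => f (fun i => v i - 1) := by
  funext v
  have hM : ∀ w : Fin n → ZMod d,
      (tensorOp fun _ : Fin n => Xd d) v w = if w = (fun i => v i - 1) then 1 else 0 := by
    intro w
    rw [tensorOp, Matrix.of_apply]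
    by_cases h : w = fun i => v i - 1
    · subst h
      rw [if_pos rfl]
      apply Finset.prod_eq_one
      intro t _
      rw [Xd, Matrix.of_apply, if_pos (by ring)]
    · rw [if_neg h]
      obtain ⟨t, ht⟩ := Function.ne_iff.mp h
      refine Finset.prod_eq_zero (Finset.mem_univ t) ?_
      rw [Xd, Matrix.of_apply, if_neg]
      intro hc
      exact ht (by linear_combination -hc)
  rw [Matrix.mulVec]
  simp only [dotProduct, hM, ite_mul, one_mul, zero_mul]
  rw [Finset.sum_ite_eq' Finset.univ (fun i => v i - 1) f, if_pos (Finset.mem_univ _)]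

lemma X_eigen (z : Fin (n - 1) → ZMod d) (x : ZMod d) :
    (tensorOp fun _ : Fin n => Xd d) *ᵥ Phi d n z x = chi d x • Phi d n z x := by
  rw [X_mulVec]
  funext v
  simp only [Pi.smul_apply, smul_eq_mul]
  rw [Phi_apply, Phi_apply]
  have hlast : (fun i => v i - 1) (lastI n) = v (lastI n) - 1 := rfl
  have hiff : (∀ i : Fin n, (fun i => v i - 1) i = Svec d n z i + (fun i => v i - 1) (lastI n))
      ↔ (∀ i : Fin n, v i = Svec d n z i + v (lastI n)) := by
    constructor
    · intro h i; have := h i; simp only [hlast] at this; linear_combination this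
    · intro h i; simp only [hlast]; linear_combination h i
  rw [if_congr hiff rfl rfl]
  rw [show (v (lastI n) - 1) * x = v (lastI n) * x + (-x) by ring, chi_add, chi_neg,
    mul_inv, inv_inv]
  ring

lemma X_pow_eigen (z : Fin (n - 1) → ZMod d) (x : ZMod d) (m : ℕ) :
    ((tensorOp fun _ : Fin n => Xd d) ^ m) *ᵥ Phi d n z x
      = chi d ((m : ZMod d) * x) • Phi d n z x := by
  induction m with
  | zero => simp [Matrix.one_mulVec, chi_zero]
  | succ k ih =>
      rw [pow_succ', ← Matrix.mulVec_mulVec, ih, Matrix.mulVec_smul, X_eigen, smul_smul]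
      congr 1
      rw [← chi_add]
      congr 1
      push_cast
      ring

lemma listprod_eigen (z : Fin (n - 1) → ZMod d) (x : ZMod d)
    (F : Fin (n - 1) → Matrix (Fin n → ZMod d) (Fin n → ZMod d) ℂ) (c : Fin (n - 1) → ℂ)
    (hF : ∀ i, F i *ᵥ Phi d n z x = c i • Phi d n z x) (l : List (Fin (n - 1))) :
    ((l.map F).prod) *ᵥ Phi d n z x = ((l.map c).prod) • Phi d n z x := by
  induction l with
  | nil => simp [Matrix.one_mulVec]
  | cons a l ih =>
      rw [List.map_cons, List.map_cons, List.prod_cons, List.prod_cons,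
        ← Matrix.mulVec_mulVec, ih, Matrix.mulVec_smul, hF, smul_smul, mul_comm]

end eigen


section ugeigen
variable (d n : ℕ) [NeZero d] [NeZero n]

noncomputable def evF (g : Fin n → ZMod d) (z : Fin (n - 1) → ZMod d) (x : ZMod d) : ZMod d :=
  (∑ i : Fin (n - 1), g ⟨i.val, by have := i.isLt; omega⟩ * z i) + g (lastI n) * x

lemma Ug_eigen (g : Fin n → ZMod d) (z : Fin (n - 1) → ZMod d) (x : ZMod d) :
    Ug d n g *ᵥ Phi d n z x = chi d (evF d n g z x) • Phi d n z x := by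
  have hF : ∀ i : Fin (n - 1),
      ((single (⟨i.val, by have := i.isLt; omega⟩ : Fin n) (Zd d) *
          (single (⟨i.val + 1, by have := i.isLt; omega⟩ : Fin n) (Zd d))⁻¹)
        ^ (g ⟨i.val, by have := i.isLt; omega⟩).val) *ᵥ Phi d n z x
      = (fun i : Fin (n - 1) =>
          chi d (g (⟨i.val, by have := i.isLt; omega⟩ : Fin n) * z i)) i • Phi d n z x := by
    intro i
    rw [factor_eigen d n z x i ((g ⟨i.val, by have := i.isLt; omega⟩).val)
      (by have := i.isLt; omega) (by have := i.isLt; omega)]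
    simp [ZMod.natCast_val, ZMod.cast_id]
  rw [Ug, ← Matrix.mulVec_mulVec, X_pow_eigen d n z x, Matrix.mulVec_smul,
    listprod_eigen d n z x _ _ hF (List.finRange (n - 1)), smul_smul]
  congr 1
  rw [← Fin.prod_univ_def, ← chi_sum, ← chi_add, evF]
  congr 1
  simp only [ZMod.natCast_val, ZMod.cast_id]
  rw [show lastI n = ⟨n - 1, by have := Nat.pos_of_ne_zero (NeZero.ne n); omega⟩ from rfl]
  ring

end ugeigen

section family
variable {ι κ : Type*} [Fintype ι] [DecidableEq ι] [Fintype κ] [DecidableEq κ]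

lemma dotc_sum_family (Φf : ι → κ → ℂ)
    (horth : ∀ p q, dotc (Φf p) (Φf q) = if p = q then 1 else 0)
    (C C' : ι → ℂ) :
    dotc (fun v => ∑ p, C p * Φf p v) (fun v => ∑ p, C' p * Φf p v)
      = ∑ p, (starRingEnd ℂ) (C p) * C' p := by
  rw [dotc]
  have hterm : ∀ v : κ, (starRingEnd ℂ) (∑ p, C p * Φf p v) * (∑ q, C' q * Φf q v)
      = ∑ p, ∑ q, ((starRingEnd ℂ) (C p) * C' q) *
          ((starRingEnd ℂ) (Φf p v) * Φf q v) := by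
    intro v
    rw [map_sum, Finset.sum_mul]
    refine Finset.sum_congr rfl fun p _ => ?_
    rw [Finset.mul_sum]
    refine Finset.sum_congr rfl fun q _ => ?_
    rw [_root_.map_mul]
    ring
  calc ∑ v, (starRingEnd ℂ) (∑ p, C p * Φf p v) * (∑ q, C' q * Φf q v)
      = ∑ v, ∑ p, ∑ q, ((starRingEnd ℂ) (C p) * C' q) *
          ((starRingEnd ℂ) (Φf p v) * Φf q v) := Finset.sum_congr rfl fun v _ => hterm v
    _ = ∑ p, ∑ v, ∑ q, ((starRingEnd ℂ) (C p) * C' q) *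
          ((starRingEnd ℂ) (Φf p v) * Φf q v) := Finset.sum_comm
    _ = ∑ p, ∑ q, ∑ v, ((starRingEnd ℂ) (C p) * C' q) *
          ((starRingEnd ℂ) (Φf p v) * Φf q v) :=
        Finset.sum_congr rfl fun p _ => Finset.sum_comm
    _ = ∑ p, ∑ q, ((starRingEnd ℂ) (C p) * C' q) * dotc (Φf p) (Φf q) := by
        refine Finset.sum_congr rfl fun p _ => Finset.sum_congr rfl fun q _ => ?_
        rw [dotc, Finset.mul_sum]
    _ = ∑ p, (starRingEnd ℂ) (C p) * C' p := by
        refine Finset.sum_congr rfl fun p _ => ?_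
        rw [Finset.sum_eq_single p]
        · rw [horth, if_pos rfl, mul_one]
        · intro q _ hq
          rw [horth, if_neg (fun hc => hq hc.symm), mul_zero]
        · intro hh; exact absurd (Finset.mem_univ _) hh

lemma mulVec_sum_family (M : Matrix κ κ ℂ) (C : ι → ℂ) (Φf : ι → κ → ℂ) :
    (M *ᵥ fun v => ∑ p, C p * Φf p v) = fun v => ∑ p, C p * (M *ᵥ Φf p) v := by
  funext v
  rw [Matrix.mulVec]
  simp only [dotProduct]
  calc ∑ w, M v w * ∑ p, C p * Φf p w
      = ∑ w, ∑ p, C p * (M v w * Φf p w) := by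
        refine Finset.sum_congr rfl fun w _ => ?_
        rw [Finset.mul_sum]
        refine Finset.sum_congr rfl fun p _ => ?_
        ring
    _ = ∑ p, ∑ w, C p * (M v w * Φf p w) := Finset.sum_comm
    _ = ∑ p, C p * (M *ᵥ Φf p) v := by
        refine Finset.sum_congr rfl fun p _ => ?_
        rw [Matrix.mulVec]
        simp only [dotProduct]
        rw [Finset.mul_sum]

end family

section main
variable (d n : ℕ) [NeZero d] [NeZero n]

lemma sum_chi_ev (g h : Fin n → ZMod d) :
    ∑ p : (Fin (n - 1) → ZMod d) × ZMod d,
      chi d (evF d n h p.1 p.2 - evF d n g p.1 p.2)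
    = if g = h then ((d : ℂ) ^ n) else 0 := by
  have hd1 : 1 ≤ n := Nat.pos_of_ne_zero (NeZero.ne n)
  set a : Fin (n - 1) → ZMod d := fun i =>
    h ⟨i.val, by have := i.isLt; omega⟩ - g ⟨i.val, by have := i.isLt; omega⟩ with ha
  set b : ZMod d := h (lastI n) - g (lastI n) with hb
  have harg : ∀ (z : Fin (n - 1) → ZMod d) (x : ZMod d),
      evF d n h z x - evF d n g z x = (∑ i, a i * z i) + b * x := by
    intro z x
    rw [evF, evF, hb]
    have : ∑ i, a i * z i =
        ∑ i : Fin (n - 1), (h ⟨i.val, by have := i.isLt; omega⟩ * z i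
          - g ⟨i.val, by have := i.isLt; omega⟩ * z i) := by
      refine Finset.sum_congr rfl fun i _ => ?_
      rw [ha]
      ring
    rw [this, Finset.sum_sub_distrib]
    ring
  calc ∑ p : (Fin (n - 1) → ZMod d) × ZMod d,
        chi d (evF d n h p.1 p.2 - evF d n g p.1 p.2)
      = ∑ z : Fin (n - 1) → ZMod d, ∑ x : ZMod d,
          (∏ i, chi d (a i * z i)) * chi d (b * x) := by
        rw [Fintype.sum_prod_type]
        refine Finset.sum_congr rfl fun z _ => Finset.sum_congr rfl fun x _ => ?_
        rw [harg, chi_add, chi_sum]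
    _ = (∑ z : Fin (n - 1) → ZMod d, ∏ i, chi d (a i * z i)) *
          (∑ x : ZMod d, chi d (b * x)) := by
        rw [Finset.sum_mul_sum]
    _ = (∏ i : Fin (n - 1), ∑ t : ZMod d, chi d (a i * t)) *
          (∑ x : ZMod d, chi d (b * x)) := by
        rw [Finset.prod_univ_sum, Fintype.piFinset_univ]
    _ = (∏ i : Fin (n - 1), if a i = 0 then (d : ℂ) else 0) *
          (if b = 0 then (d : ℂ) else 0) := by
        rw [sum_chi]
        refine congrArg (· * _) (Finset.prod_congr rfl fun i _ => sum_chi d (a i))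
    _ = if g = h then ((d : ℂ) ^ n) else 0 := by
        by_cases hgh : g = h
        · subst hgh
          rw [if_pos rfl]
          have h0 : ∀ i : Fin (n - 1), a i = 0 := fun i => by rw [ha]; exact sub_self _
          have hb0 : b = 0 := by rw [hb]; exact sub_self _
          simp only [h0, hb0, if_pos rfl, Finset.prod_const, Finset.card_univ,
            Fintype.card_fin]
          rw [← pow_succ]
          congr 1
          omega
        · rw [if_neg hgh]
          obtain ⟨j, hj⟩ := Function.ne_iff.mp hgh
          by_cases hjl : j.val < n - 1
          · have : a ⟨j.val, hjl⟩ ≠ 0 := by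
              rw [ha]
              refine sub_ne_zero_of_ne ?_
              have hje : (⟨(⟨j.val, hjl⟩ : Fin (n - 1)).val, by omega⟩ : Fin n) = j :=
                Fin.ext rfl
              rw [hje]
              exact fun hc => hj hc.symm
            have hz : (if a ⟨j.val, hjl⟩ = 0 then (d : ℂ) else 0) = 0 := if_neg this
            rw [Finset.prod_eq_zero (Finset.mem_univ (⟨j.val, hjl⟩ : Fin (n - 1))) hz,
              zero_mul]
          · have hjlast : j = lastI n := Fin.ext (by have := j.isLt; simp [lastI]; omega)
            have : b ≠ 0 := by
              rw [hb, ← hjlast]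
              exact sub_ne_zero_of_ne fun hc => hj hc.symm
            rw [if_neg this, mul_zero]

end main

theorem stmt2 (d n : ℕ) [NeZero d] [NeZero n] (hd : 2 ≤ d) (hn : 2 ≤ n)
    (α : (Fin (n - 1) → ZMod d) → ZMod d → ℝ) :
    let ψ : (Fin n → ZMod d) → ℂ := fun v =>
      ((Real.sqrt d : ℂ) ^ n)⁻¹ * ∑ z : Fin (n - 1) → ZMod d, ∑ x : ZMod d,
        Complex.exp (α z x * Complex.I) * Phi d n z x v
    (dotc ψ ψ = 1) ∧
    (∀ g h : Fin n → ZMod d,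
      dotc (Ug d n g *ᵥ ψ) (Ug d n h *ᵥ ψ) = if g = h then 1 else 0) ∧
    Submodule.span ℂ (Set.range fun g : Fin n → ZMod d => Ug d n g *ᵥ ψ) = ⊤ := by
  intro ψ
  have hdC : ((d : ℂ) ^ n) ≠ 0 := pow_ne_zero _ (Nat.cast_ne_zero.mpr (NeZero.ne d))
  set C : ((Fin (n - 1) → ZMod d) × ZMod d) → ℂ := fun p =>
    ((Real.sqrt d : ℂ) ^ n)⁻¹ * Complex.exp (α p.1 p.2 * Complex.I) with hC
  set Φf : ((Fin (n - 1) → ZMod d) × ZMod d) → (Fin n → ZMod d) → ℂ := fun p =>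
    Phi d n p.1 p.2 with hΦf
  have horth : ∀ p q, dotc (Φf p) (Φf q) = if p = q then 1 else 0 := by
    intro p q
    rw [hΦf, dotc_Phi]
    exact if_congr (by rw [Prod.ext_iff]) rfl rfl
  have hψ : ψ = fun v => ∑ p, C p * Φf p v := by
    funext v
    show ((Real.sqrt d : ℂ) ^ n)⁻¹ * ∑ z : Fin (n - 1) → ZMod d, ∑ x : ZMod d,
        Complex.exp (α z x * Complex.I) * Phi d n z x v = _
    rw [Fintype.sum_prod_type, Finset.mul_sum]
    refine Finset.sum_congr rfl fun z _ => ?_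
    rw [Finset.mul_sum]
    refine Finset.sum_congr rfl fun x _ => ?_
    rw [hC, hΦf]
    ring
  have hCC : ∀ p, (starRingEnd ℂ) (C p) * C p = ((d : ℂ) ^ n)⁻¹ := by
    intro p
    rw [hC]
    simp only [_root_.map_mul, map_inv₀, map_pow, Complex.conj_ofReal, ← Complex.exp_conj,
      _root_.map_mul, Complex.conj_ofReal, Complex.conj_I]
    rw [show ((α p.1 p.2 : ℝ) : ℂ) * -Complex.I
        = -(((α p.1 p.2 : ℝ) : ℂ) * Complex.I) by ring]
    rw [show ((Real.sqrt d : ℂ) ^ n)⁻¹ * Complex.exp (-((α p.1 p.2 : ℝ) * Complex.I)) *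
        (((Real.sqrt d : ℂ) ^ n)⁻¹ * Complex.exp ((α p.1 p.2 : ℝ) * Complex.I))
        = ((Real.sqrt d : ℂ) ^ n * (Real.sqrt d : ℂ) ^ n)⁻¹ *
          (Complex.exp (-((α p.1 p.2 : ℝ) * Complex.I)) *
            Complex.exp ((α p.1 p.2 : ℝ) * Complex.I)) by rw [mul_inv]; ring]
    rw [← Complex.exp_add, neg_add_cancel, Complex.exp_zero, mul_one, ← mul_pow,
      sqrtd_mul_self]
  have horbit : ∀ g h : Fin n → ZMod d,
      dotc (Ug d n g *ᵥ ψ) (Ug d n h *ᵥ ψ) = if g = h then 1 else 0 := by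
    intro g h
    have hUg : ∀ g' : Fin n → ZMod d, Ug d n g' *ᵥ ψ
        = fun v => ∑ p, (C p * chi d (evF d n g' p.1 p.2)) * Φf p v := by
      intro g'
      rw [hψ, mulVec_sum_family]
      funext v
      refine Finset.sum_congr rfl fun p _ => ?_
      rw [hΦf, Ug_eigen]
      simp only [Pi.smul_apply, smul_eq_mul]
      ring
    rw [hUg g, hUg h, dotc_sum_family Φf horth]
    have hterm : ∀ p, (starRingEnd ℂ) (C p * chi d (evF d n g p.1 p.2)) *
        (C p * chi d (evF d n h p.1 p.2))
        = ((d : ℂ) ^ n)⁻¹ * chi d (evF d n h p.1 p.2 - evF d n g p.1 p.2) := by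
      intro p
      rw [_root_.map_mul, conj_chi, show (starRingEnd ℂ) (C p) * chi d (-evF d n g p.1 p.2) *
          (C p * chi d (evF d n h p.1 p.2))
          = ((starRingEnd ℂ) (C p) * C p) *
            (chi d (evF d n h p.1 p.2) * chi d (-evF d n g p.1 p.2)) by ring,
        hCC, ← chi_add, sub_eq_add_neg]
    rw [Finset.sum_congr rfl fun p _ => hterm p, ← Finset.mul_sum, sum_chi_ev]
    by_cases hgh : g = h
    · rw [if_pos hgh, if_pos hgh, inv_mul_cancel₀ hdC]
    · rw [if_neg hgh, if_neg hgh, mul_zero]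
  refine ⟨?_, horbit, ?_⟩
  · rw [hψ, dotc_sum_family Φf horth, Finset.sum_congr rfl fun p _ => hCC p,
      Finset.sum_const, Finset.card_univ, nsmul_eq_mul]
    rw [show (Fintype.card ((Fin (n - 1) → ZMod d) × ZMod d) : ℂ) = ((d : ℂ) ^ n) by
      rw [Fintype.card_prod, Fintype.card_fun, ZMod.card, Fintype.card_fin]
      push_cast
      rw [← pow_succ]
      congr 1
      omega]
    exact mul_inv_cancel₀ hdC
  · have hli : LinearIndependent ℂ (fun g : Fin n → ZMod d => Ug d n g *ᵥ ψ) := by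
      rw [Fintype.linearIndependent_iff]
      intro c hc h0
      have hd0 : dotc (Ug d n h0 *ᵥ ψ)
          (∑ g : Fin n → ZMod d, c g • (Ug d n g *ᵥ ψ)) = c h0 := by
        rw [dotc]
        calc ∑ v, (starRingEnd ℂ) ((Ug d n h0 *ᵥ ψ) v) *
              (∑ g : Fin n → ZMod d, c g • (Ug d n g *ᵥ ψ)) v
            = ∑ v, ∑ g : Fin n → ZMod d,
                c g * ((starRingEnd ℂ) ((Ug d n h0 *ᵥ ψ) v) * (Ug d n g *ᵥ ψ) v) := by
              refine Finset.sum_congr rfl fun v _ => ?_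
              simp only [Finset.sum_apply, Pi.smul_apply, smul_eq_mul]
              rw [Finset.mul_sum]
              refine Finset.sum_congr rfl fun g _ => ?_
              ring
          _ = ∑ g : Fin n → ZMod d, ∑ v,
                c g * ((starRingEnd ℂ) ((Ug d n h0 *ᵥ ψ) v) * (Ug d n g *ᵥ ψ) v) :=
              Finset.sum_comm
          _ = ∑ g : Fin n → ZMod d, c g * dotc (Ug d n h0 *ᵥ ψ) (Ug d n g *ᵥ ψ) := by
              refine Finset.sum_congr rfl fun g _ => ?_
              rw [dotc, Finset.mul_sum]
          _ = c h0 := by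
              rw [Finset.sum_congr rfl fun g _ => by rw [horbit h0 g]]
              rw [Finset.sum_eq_single h0]
              · rw [if_pos rfl, mul_one]
              · intro g _ hg
                rw [if_neg (fun hc' => hg hc'.symm), mul_zero]
              · intro hh; exact absurd (Finset.mem_univ _) hh
      rw [hc] at hd0
      rw [← hd0, dotc]
      simp
    apply hli.span_eq_top_of_card_eq_finrank
    rw [Module.finrank_fintype_fun_eq_card]
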